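/- Let p > 2, p′ = p/(p−1), a > 0 and 0 ≤ b ≤ p − 1, and let h be the Legendre transform of f(s,t) = (a/p)(|s|^p + 2b|s|^{p/2}|t|^{p/2} + |t|^p). Then for all real s̄, t̄ one has (1/p′) ( a(1+b) )^{1−p′} ( |s̄|^{p′} + |t̄|^{p′} ) ≤ h(s̄, t̄) ≤ (1/p′) a^{1−p′} ( |s̄|^{p′} + |t̄|^{p′} ). -/

import Mathlib

open Real

/-- Young-type pointwise upper bound for one variable. -/
lemma young_c {p p' c : ℝ} (hpq : Real.HolderConjugate p p') (hc : 0 < c) (x xb : ℝ) :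
    x * xb - (c / p) * |x| ^ p ≤ (1 / p') * c ^ (1 - p') * |xb| ^ p' := by
  have h0 : x * xb ≤ |x| * |xb| := (le_abs_self _).trans_eq (abs_mul x xb)
  have hY : c ^ ((1:ℝ)/p) * |x| * (c ^ (-((1:ℝ)/p)) * |xb|) ≤
      (c ^ ((1:ℝ)/p) * |x|) ^ p / p + (c ^ (-((1:ℝ)/p)) * |xb|) ^ p' / p' :=
    Real.young_inequality_of_nonneg
      (mul_nonneg (Real.rpow_nonneg hc.le _) (abs_nonneg x))
      (mul_nonneg (Real.rpow_nonneg hc.le _) (abs_nonneg xb)) hpq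
  have e0 : c ^ ((1:ℝ)/p) * |x| * (c ^ (-((1:ℝ)/p)) * |xb|) = |x| * |xb| := by
    rw [mul_mul_mul_comm, ← Real.rpow_add hc]
    simp
  have e1 : (c ^ ((1:ℝ)/p) * |x|) ^ p = c * |x| ^ p := by
    rw [Real.mul_rpow (Real.rpow_nonneg hc.le _) (abs_nonneg x), ← Real.rpow_mul hc.le,
      one_div_mul_cancel hpq.ne_zero, Real.rpow_one]
  have e2 : (c ^ (-((1:ℝ)/p)) * |xb|) ^ p' = c ^ (1 - p') * |xb| ^ p' := by
    have hexp2 : -((1:ℝ)/p) * p' = 1 - p' := by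
      have hm := hpq.mul_eq_add
      field_simp [hpq.ne_zero]
      linarith
    rw [Real.mul_rpow (Real.rpow_nonneg hc.le _) (abs_nonneg xb), ← Real.rpow_mul hc.le, hexp2]
  have hY' : |x| * |xb| ≤ c * |x| ^ p / p + c ^ (1 - p') * |xb| ^ p' / p' := by
    rw [← e0, ← e1, ← e2]; exact hY
  ring_nf at hY' ⊢
  linarith

/-- the supremum in one variable is attained. -/
lemma attain_c {p p' c : ℝ} (hp1 : 1 < p) (hp' : p' = p / (p - 1)) (hc : 0 < c) (xb : ℝ) :
    ∃ x : ℝ, x * xb - (c / p) * |x| ^ p = (1 / p') * c ^ (1 - p') * |xb| ^ p' := by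
  have hp0 : (0:ℝ) < p := by linarith
  have hp1' : (0:ℝ) < p - 1 := by linarith
  have hp'pos : 0 < p' := by rw [hp']; positivity
  rcases eq_or_ne xb 0 with rfl | hxb
  · exact ⟨0, by simp [Real.zero_rpow hp0.ne', Real.zero_rpow hp'pos.ne']⟩
  · have hy : 0 < |xb| := abs_pos.2 hxb
    set y := |xb| with hydef
    have hyc : 0 < y / c := div_pos hy hc
    set r := (y / c) ^ ((1:ℝ)/(p-1)) with hrdef
    have hr : 0 < r := Real.rpow_pos_of_pos hyc _
    refine ⟨if 0 ≤ xb then r else -r, ?_⟩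
    have hx1 : (if 0 ≤ xb then r else -r) * xb = r * y := by
      split_ifs with hxx
      · rw [hydef, abs_of_nonneg hxx]
      · push_neg at hxx
        rw [hydef, abs_of_neg hxx]; ring
    have hx2 : |if 0 ≤ xb then r else -r| = r := by
      split_ifs <;> simp [abs_of_pos hr]
    rw [hx1, hx2]
    have hA : r ^ p = (y / c) ^ p' := by
      rw [hrdef, ← Real.rpow_mul hyc.le]
      congr 1
      rw [hp']; ring
    have hexp : p' = (1:ℝ)/(p-1) + 1 := by
      rw [hp']; field_simp; ring
    have hB : r * y = (y / c) ^ p' * c := by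
      rw [hexp, Real.rpow_add hyc, Real.rpow_one, ← hrdef]
      field_simp
    rw [hB, hA]
    have hC : (y / c) ^ p' = y ^ p' / c ^ p' := Real.div_rpow hy.le hc.le p'
    have hD : c ^ ((1:ℝ) - p') = c / c ^ p' := by
      rw [Real.rpow_sub hc, Real.rpow_one]
    have hcp : (0:ℝ) < c ^ p' := Real.rpow_pos_of_pos hc _
    have hmul : p' * (p - 1) = p := by rw [hp']; field_simp
    rw [hC, hD]
    field_simp
    linear_combination hmul

/-- two-sided bound for the Legendre transform `h` of `f`:
`(1/p')(a(1+b))^(1-p')(|s̄|^(p') + |t̄|^(p')) ≤ h(s̄,t̄) ≤ (1/p') a^(1-p') (|s̄|^(p') + |t̄|^(p'))`. -/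
theorem stmt_11 (p p' a b : ℝ) (hp : 2 < p) (hp' : p' = p / (p - 1)) (ha : 0 < a)
    (hb0 : 0 ≤ b) (hb1 : b ≤ p - 1)
    (h : ℝ → ℝ → ℝ)
    (hh : ∀ sb tb : ℝ, h sb tb = ⨆ st : ℝ × ℝ,
      (st.1 * sb + st.2 * tb -
        (a / p) * (|st.1| ^ p + 2 * b * |st.1| ^ (p / 2) * |st.2| ^ (p / 2) + |st.2| ^ p)))
    (sb tb : ℝ) :
    (1 / p') * (a * (1 + b)) ^ (1 - p') * (|sb| ^ p' + |tb| ^ p') ≤ h sb tb ∧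
      h sb tb ≤ (1 / p') * a ^ (1 - p') * (|sb| ^ p' + |tb| ^ p') := by
  have hp1 : (1:ℝ) < p := by linarith
  have hpq : Real.HolderConjugate p p' := by
    rw [Real.holderConjugate_iff_eq_conjExponent hp1]; exact hp'
  set F : ℝ × ℝ → ℝ := fun st =>
    st.1 * sb + st.2 * tb -
      (a / p) * (|st.1| ^ p + 2 * b * |st.1| ^ (p / 2) * |st.2| ^ (p / 2) + |st.2| ^ p) with hF
  have hub : ∀ st : ℝ × ℝ, F st ≤ (1 / p') * a ^ (1 - p') * (|sb| ^ p' + |tb| ^ p') := by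
    intro st
    have h1 := young_c hpq ha st.1 sb
    have h2 := young_c hpq ha st.2 tb
    have hcr : 0 ≤ (a / p) * (2 * b * |st.1| ^ (p / 2) * |st.2| ^ (p / 2)) := by
      have := hpq.pos
      positivity
    simp only [hF]
    nlinarith [h1, h2, hcr]
  have hbdd : BddAbove (Set.range F) := by
    refine ⟨(1 / p') * a ^ (1 - p') * (|sb| ^ p' + |tb| ^ p'), ?_⟩
    rintro _ ⟨st, rfl⟩
    exact hub st
  constructor
  · -- lower bound
    set c := a * (1 + b) with hcdef
    have hc : 0 < c := by positivity
    obtain ⟨x, hx⟩ := attain_c hp1 hp' hc sb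
    obtain ⟨z, hz⟩ := attain_c hp1 hp' hc tb
    have hsq : ∀ w : ℝ, |w| ^ (p / 2) * |w| ^ (p / 2) = |w| ^ p := by
      intro w
      rw [← Real.rpow_add_of_nonneg (abs_nonneg w) (by positivity) (by positivity)]
      norm_num
    have hcross : 2 * b * |x| ^ (p / 2) * |z| ^ (p / 2) ≤ b * (|x| ^ p + |z| ^ p) := by
      nlinarith [sq_nonneg (|x| ^ (p / 2) - |z| ^ (p / 2)), hsq x, hsq z,
        mul_nonneg (Real.rpow_nonneg (abs_nonneg x) (p/2)) (Real.rpow_nonneg (abs_nonneg z) (p/2))]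
    have hkey : (1 / p') * c ^ (1 - p') * (|sb| ^ p' + |tb| ^ p') ≤ F (x, z) := by
      have hap : 0 < a / p := div_pos ha hpq.pos
      have : F (x, z) ≥ x * sb + z * tb - (c / p) * (|x| ^ p + |z| ^ p) := by
        simp only [hF, hcdef]
        have := mul_le_mul_of_nonneg_left hcross hap.le
        ring_nf
        ring_nf at this
        nlinarith [this]
      calc (1 / p') * c ^ (1 - p') * (|sb| ^ p' + |tb| ^ p')
          = (x * sb - (c / p) * |x| ^ p) + (z * tb - (c / p) * |z| ^ p) := by
            rw [hx, hz]; ring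
        _ = x * sb + z * tb - (c / p) * (|x| ^ p + |z| ^ p) := by ring
        _ ≤ F (x, z) := this
    rw [hh]
    exact hkey.trans (le_ciSup hbdd (x, z))
  · rw [hh]
    exact ciSup_le hub
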